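/- Let α, β be real with (α,β) ≠ (0,0) and B = (1/√(α²+4β²))·[[α, 2β], [−2β, α]]. If α + γβ = 1 and γα² + 2β² = 2β, then B·[[α − γβ, γα], [γα, β]]·Bᵀ = diag(1, (1−2γ)β). -/

import Mathlib

open Matrix

theorem stmt_5 (γ α β : ℝ) (h : (α, β) ≠ (0, 0))
    (h1 : α + γ*β = 1) (h2 : γ*α^2 + 2*β^2 = 2*β)
    (B : Matrix (Fin 2) (Fin 2) ℝ)
    (hB : B = (1 / Real.sqrt (α^2 + 4*β^2)) • !![α, 2*β; -(2*β), α]) :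
    B * !![α - γ*β, γ*α; γ*α, β] * Bᵀ = !![(1 : ℝ), 0; 0, (1 - 2*γ)*β] := by
  have hne : α ≠ 0 ∨ β ≠ 0 := by
    by_contra hc; push_neg at hc; exact h (by simp [hc.1, hc.2])
  have hs : α^2 + 4*β^2 > 0 := by rcases hne with ha | hb <;> positivity
  set r := Real.sqrt (α^2 + 4*β^2) with hr
  have hr2 : r^2 = α^2 + 4*β^2 := Real.sq_sqrt hs.le
  have hrne : r ≠ 0 := by positivity
  set M : Matrix (Fin 2) (Fin 2) ℝ := !![α, 2*β; -(2*β), α] with hM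
  set A : Matrix (Fin 2) (Fin 2) ℝ := !![α - γ*β, γ*α; γ*α, β] with hA
  have key : B * A * Bᵀ = (1/(α^2 + 4*β^2)) • (M * A * Mᵀ) := by
    rw [hB, Matrix.transpose_smul, Matrix.smul_mul, Matrix.mul_smul,
      Matrix.smul_mul, smul_smul]
    congr 1
    rw [div_mul_div_comm, one_mul, ← hr2]
    ring
  rw [key]
  ext i j
  fin_cases i <;> fin_cases j <;>
    simp [hM, hA, Matrix.mul_apply, Fin.sum_univ_two, Matrix.transpose_apply,
      Matrix.vecHead, Matrix.vecTail, Matrix.vecMul, dotProduct]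
  · rw [inv_mul_eq_div, div_eq_iff hs.ne']
    linear_combination (α^2)*h1 + (2*β)*h2
  · right; linear_combination (-2*α*β)*h1 + α*h2
  · right; linear_combination (-2*α*β)*h1 + α*h2
  · rw [inv_mul_eq_div, div_eq_iff hs.ne']
    linear_combination (4*β^2)*h1 - (2*β)*h2
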